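/- Let X be a topological space, Φ : X → X continuous, F : X → ℝ a Lyapunov function for Φ, and suppose (Φ, F) satisfies condition (D). Let A ⊆ X with Φ(A) ⊆ A and closure(A) ∩ Fix Φ ⊆ A. Then the restricted pair (Φ|_A : A → A, F|_A) satisfies condition (D). -/
import Mathlib


/-- Condition (D) of Rudyak–Schlenk for a pair `(φ, f)`:
(D₁) `f(φ(x)) < f(x)` for all `x ∉ Fix φ`; and
(D₂) for every nonempty subset `A` on which `f` is bounded and with
`inf {f(a) − f(φ(a)) | a ∈ A} = 0`, the closure of `A` meets `Fix φ`. -/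
def CondD {X : Type*} [TopologicalSpace X] (φ : X → X) (f : X → ℝ) : Prop :=
  (∀ x, φ x ≠ x → f (φ x) < f x) ∧
  (∀ A : Set X, A.Nonempty → (∃ C : ℝ, ∀ a ∈ A, |f a| ≤ C) →
    sInf ((fun a => f a - f (φ a)) '' A) = 0 →
    (closure A ∩ {x | φ x = x}).Nonempty)

theorem stmt9 {X : Type*} [TopologicalSpace X] (Φ : X → X) (hΦ : Continuous Φ)
    (F : X → ℝ) (hLyap : ∀ x, F (Φ x) ≤ F x) (hD : CondD Φ F)
    (A : Set X) (hmaps : Set.MapsTo Φ A A)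
    (hcl : closure A ∩ {x | Φ x = x} ⊆ A) :
    CondD (Set.MapsTo.restrict Φ A A hmaps) (fun a : A => F a) := by
  constructor
  · intro x hx
    exact hD.1 x fun h => hx (Subtype.ext h)
  · intro B hB ⟨C, hC⟩ hinf
    have key : (fun a => F a - F (Φ a)) '' (Subtype.val '' B) =
        (fun a : A => F a - F (Φ a)) '' B := by
      rw [Set.image_image]
    obtain ⟨x, hxcl, hxfix⟩ := hD.2 (Subtype.val '' B) (hB.image _)
      ⟨C, by rintro _ ⟨a, ha, rfl⟩; exact hC a ha⟩
      (by rw [key]; exact hinf)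
    have hxA : x ∈ A := hcl ⟨closure_mono (Set.image_subset_iff.2
      fun b _ => b.2) hxcl, hxfix⟩
    refine ⟨⟨x, hxA⟩, ?_, ?_⟩
    · rw [closure_subtype]; exact hxcl
    · exact Subtype.ext hxfix
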